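/- Let r > 1 and s ∈ {1,...,r+1} be coprime. There exists a descending partition λ = (λ₁,...,λ_ℓ) of r such that λ(i) := min{m : λ₁+...+λ_m ≥ i} equals 1 + ⌊s(i−1)/r⌋ for all i ∈ {1,...,r} if and only if r ≡ ±1 (mod s). In that case, writing r = r′s + r″ with r″ ∈ {1, s−1}, the partition is λ₁ = ... = λ_{r″} = r′+1 and λ_{r″+1} = ... = λ_ℓ = r′, with ℓ = s − [s = r+1]. -/

import Mathlib

open Finset

/-- The counting function of a partition (given as a list of parts):
`partCount L i = min {m | λ₁ + ⋯ + λ_m ≥ i}`. -/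
noncomputable def partCount (L : List ℕ) (i : ℕ) : ℕ := sInf {m | i ≤ (L.take m).sum}

/-- for coprime `r > 1`, `s ∈ {1,…,r+1}`, a descending partition `λ ⊢ r` with
`λ(i) = 1 + ⌊s(i-1)/r⌋` exists iff `r ≡ ±1 (mod s)`, in which case it is given by
`((r'+1)^{r''}, (r')^{ℓ-r''})` with `r = r's + r''`, `r'' ∈ {1, s-1}`, `ℓ = s - [s = r+1]`. -/
private lemma sum_take_mono (L : List ℕ) {a b : ℕ} (h : a ≤ b) :
    (L.take a).sum ≤ (L.take b).sum := by
  have h' : L.take a = (L.take b).take a := by rw [List.take_take, min_eq_left h]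
  rw [h']
  exact ((L.take b).take_sublist a).sum_le_sum (by simp)

private lemma partCount_eq_succ {L : List ℕ} {i m : ℕ} (h1 : (L.take m).sum < i)
    (h2 : i ≤ (L.take (m+1)).sum) : partCount L i = m + 1 := by
  have hne : (m+1) ∈ {n | i ≤ (L.take n).sum} := h2
  refine le_antisymm (Nat.sInf_le hne) ?_
  by_contra h
  push_neg at h
  have hm := Nat.sInf_mem (Set.nonempty_of_mem hne)
  have : i ≤ (L.take m).sum :=
    le_trans hm (sum_take_mono L (by unfold partCount at h; omega))
  omega

private lemma S_formula (a b x y m : ℕ) :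
    ((List.replicate a x ++ List.replicate b y).take m).sum
      = min m a * x + min (m - a) b * y := by
  simp [List.take_append, List.take_replicate, List.sum_replicate, mul_comm]

private lemma kfacts {x r : ℕ} (hr : 0 < r) {k : ℕ} (hk : x / r = k) :
    k * r ≤ x ∧ x < (k + 1) * r := by
  subst hk
  refine ⟨Nat.div_mul_le_self x r, ?_⟩
  have h1 := Nat.div_add_mod x r
  have h2 := Nat.mod_lt x hr
  nlinarith

private lemma construction (r s : ℕ) (hr : 1 < r) (hs1 : 1 ≤ s) (hs2 : s ≤ r + 1)
    (hcop : Nat.Coprime r s) (r' r'' : ℕ) (h1 : r = r' * s + r'') (h2 : r'' = 1 ∨ r'' = s - 1)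
    (L : List ℕ)
    (hL : L = List.replicate r'' (r' + 1) ++
        List.replicate ((s - (if s = r + 1 then 1 else 0)) - r'') r') :
    L.Pairwise (· ≥ ·) ∧ (∀ x ∈ L, 0 < x) ∧ L.sum = r ∧
      ∀ i ∈ Finset.Icc 1 r, partCount L i = 1 + s * (i - 1) / r := by
  have hsorted : L.Pairwise (· ≥ ·) := by
    rw [hL, List.pairwise_append]
    refine ⟨List.pairwise_replicate.2 ?_, List.pairwise_replicate.2 ?_, ?_⟩ <;>
      simp_all [List.mem_replicate]
  refine ⟨hsorted, ?_⟩
  by_cases hse : s = r + 1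
  · -- special case s = r + 1 : r' = 0, r'' = r, L = replicate r 1
    subst hse
    have hane : r'' ≠ 1 := by
      intro hx
      rcases Nat.eq_zero_or_pos r' with h0 | h0
      · rw [h0] at h1; simp at h1; omega
      · have := Nat.le_mul_of_pos_left (r + 1) h0; omega
    have hav : r'' = r := by omega
    have hr0 : r' = 0 := by
      rcases Nat.eq_zero_or_pos r' with h0 | h0
      · exact h0
      · have := Nat.le_mul_of_pos_left (r + 1) h0; omega
    rw [hav, hr0] at hL
    norm_num at hL
    refine ⟨?_, ?_, ?_⟩
    · intro x hx; rw [hL] at hx; simp [List.mem_replicate] at hx; omega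
    · rw [hL]; simp [List.sum_replicate]
    · intro i hi
      simp only [Finset.mem_Icc] at hi
      obtain ⟨j, rfl⟩ : ∃ j, i = j + 1 := ⟨i - 1, by omega⟩
      have hkval : (r + 1) * (j + 1 - 1) / r = j := by
        rw [Nat.add_sub_cancel, show (r + 1) * j = r * j + j by ring,
          Nat.mul_add_div (by omega), Nat.div_eq_of_lt (by omega)]
        omega
      rw [hkval, hL, show 1 + j = j + 1 by omega]
      apply partCount_eq_succ <;>
        simp [List.take_replicate, List.sum_replicate] <;> omega
  · -- generic: s ≠ r + 1
    rw [if_neg hse, Nat.sub_zero] at hL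
    rcases h2 with h2 | h2
    · -- r'' = 1
      subst h2
      have hqpos : 1 ≤ r' := by
        rcases Nat.eq_zero_or_pos r' with h0 | h0
        · rw [h0] at h1; simp at h1; omega
        · exact h0
      have hsr : s ≤ r := by
        have := Nat.le_mul_of_pos_left s hqpos; omega
      obtain ⟨s', rfl⟩ : ∃ s', s = s' + 1 := ⟨s - 1, by omega⟩
      rw [Nat.add_sub_cancel] at hL
      have hrv : r = r' * s' + r' + 1 := by rw [h1]; ring
      refine ⟨?_, ?_, ?_⟩
      · intro x hx; rw [hL] at hx
        simp [List.mem_append, List.mem_replicate] at hx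
        rcases hx with ⟨_, rfl⟩ | ⟨_, rfl⟩ <;> omega
      · rw [hL]; simp [List.sum_replicate]; linarith [hrv]
      · intro i hi
        simp only [Finset.mem_Icc] at hi
        obtain ⟨j, rfl⟩ : ∃ j, i = j + 1 := ⟨i - 1, by omega⟩
        rw [Nat.add_sub_cancel]
        obtain ⟨k, hkdef⟩ : ∃ k, (s' + 1) * j / r = k := ⟨_, rfl⟩
        obtain ⟨hk1, hk2⟩ := kfacts (show 0 < r by omega) hkdef
        have hks : k < s' + 1 := by
          rw [← hkdef, Nat.div_lt_iff_lt_mul (show 0 < r by omega)]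
          exact mul_lt_mul_of_pos_left (show j < r by omega) (by omega)
        rw [hkdef, show 1 + k = k + 1 by omega, hL]
        apply partCount_eq_succ
        · rcases Nat.eq_zero_or_pos k with hk0 | hk0
          · subst hk0; simp
          obtain ⟨k', rfl⟩ : ∃ k', k = k' + 1 := ⟨k - 1, by omega⟩
          have hm1 : min (k' + 1) 1 = 1 := by omega
          have hm2 : min (k' + 1 - 1) s' = k' := by omega
          rw [S_formula, hm1, hm2]
          -- goal : 1 * (r'+1) + k' * r' < j + 1
          have e1 : (k' + 1) * r = (s' + 1) * ((k' + 1) * r') + (k' + 1) := by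
            rw [hrv]; ring
          have h3 : (s' + 1) * ((k' + 1) * r') < (s' + 1) * j := by linarith
          have key : (k' + 1) * r' < j := lt_of_mul_lt_mul_left h3 (by omega)
          have : (k' + 1) * r' = k' * r' + r' := by ring
          omega
        · have hm1 : min (k + 1) 1 = 1 := by omega
          have hm2 : min (k + 1 - 1) s' = k := by omega
          rw [S_formula, hm1, hm2]
          -- goal : j + 1 ≤ 1 * (r'+1) + k * r'
          have e1 : (k + 1) * r ≤ (s' + 1) * ((k + 1) * r' + 1) := by
            have e2 : (k + 1) * r + (s' - k) = (s' + 1) * ((k + 1) * r' + 1) := by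
              rw [hrv]
              have : s' - k + k = s' := by omega
              nlinarith [this]
            omega
          have h3 : (s' + 1) * j < (s' + 1) * ((k + 1) * r' + 1) :=
            lt_of_lt_of_le hk2 e1
          have key : j < (k + 1) * r' + 1 := lt_of_mul_lt_mul_left h3 (by omega)
          have : (k + 1) * r' = k * r' + r' := by ring
          omega
    · -- r'' = s - 1
      subst h2
      obtain ⟨s', rfl⟩ : ∃ s', s = s' + 1 := ⟨s - 1, by omega⟩
      rw [Nat.add_sub_cancel] at hL h1
      rw [show s' + 1 - s' = 1 from by omega] at hL
      have hqpos : 1 ≤ r' := by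
        rcases Nat.eq_zero_or_pos r' with h0 | h0
        · exfalso; rw [h0] at h1; simp at h1; omega
        · exact h0
      have hrv : r = r' * s' + r' + s' := by rw [h1]; ring
      refine ⟨?_, ?_, ?_⟩
      · intro x hx; rw [hL] at hx
        simp [List.mem_append, List.mem_replicate] at hx
        rcases hx with ⟨_, rfl⟩ | rfl <;> omega
      · rw [hL]; simp [List.sum_replicate]; linarith [hrv]
      · intro i hi
        simp only [Finset.mem_Icc] at hi
        obtain ⟨j, rfl⟩ : ∃ j, i = j + 1 := ⟨i - 1, by omega⟩
        rw [Nat.add_sub_cancel]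
        obtain ⟨k, hkdef⟩ : ∃ k, (s' + 1) * j / r = k := ⟨_, rfl⟩
        obtain ⟨hk1, hk2⟩ := kfacts (show 0 < r by omega) hkdef
        have hks : k < s' + 1 := by
          rw [← hkdef, Nat.div_lt_iff_lt_mul (show 0 < r by omega)]
          exact mul_lt_mul_of_pos_left (show j < r by omega) (by omega)
        rw [hkdef, show 1 + k = k + 1 by omega, hL]
        apply partCount_eq_succ
        · have hm1 : min k s' = k := by omega
          have hz : k - s' = 0 := by omega
          rw [S_formula, hm1, hz]
          simp only [Nat.zero_min, Nat.zero_mul, Nat.add_zero]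
          -- goal : k * (r'+1) < j + 1
          have e1 : (s' + 1) * (k * (r' + 1)) = k * r + k := by rw [hrv]; ring
          have h3 : (s' + 1) * (k * (r' + 1)) < (s' + 1) * (j + 1) := by linarith
          have h4 : k * (r' + 1) < j + 1 := lt_of_mul_lt_mul_left h3 (by omega)
          omega
        · rcases Nat.lt_or_ge (k + 1) (s' + 1) with hcase | hcase
          · have hm1 : min (k + 1) s' = k + 1 := by omega
            have hz : k + 1 - s' = 0 := by omega
            rw [S_formula, hm1, hz]
            simp only [Nat.zero_min, Nat.zero_mul, Nat.add_zero]
            -- goal : j + 1 ≤ (k+1) * (r'+1)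
            have e1 : (s' + 1) * ((k + 1) * (r' + 1)) = (k + 1) * r + (k + 1) := by
              rw [hrv]; ring
            have h3 : (s' + 1) * (j + 1) < (s' + 1) * ((k + 1) * (r' + 1) + 1) := by
              have : (s' + 1) * ((k + 1) * (r' + 1) + 1)
                  = (s' + 1) * ((k + 1) * (r' + 1)) + (s' + 1) := by ring
              linarith
            have h4 : j + 1 < (k + 1) * (r' + 1) + 1 := lt_of_mul_lt_mul_left h3 (by omega)
            omega
          · have hkeq : k = s' := by omega
            have hm1 : min (k + 1) s' = s' := by omega
            have hm2 : min (k + 1 - s') 1 = 1 := by omega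
            rw [S_formula, hm1, hm2]
            -- goal : j + 1 ≤ s' * (r'+1) + 1 * r'
            have : s' * (r' + 1) = r' * s' + s' := by ring
            omega

private lemma coprime_ndvd {s t : ℕ} (hcop : Nat.Coprime s t) (ht : 2 ≤ t) : ¬ t ∣ s := by
  intro h
  have := Nat.dvd_one.mp (hcop ▸ Nat.dvd_gcd h (dvd_refl t))
  omega

private lemma viol (s t : ℕ) (ht2 : 2 ≤ t) (hts : t + 2 ≤ s) (hcop : Nat.Coprime s t) :
    ∃ m, 1 ≤ m ∧ m + 3 ≤ s ∧ 2 * ((m + 1) * t / s) < m * t / s + (m + 2) * t / s := by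
  have hst : t < s := by omega
  rcases Nat.lt_or_ge (2 * t) s with h2t | h2t
  · -- case 2t < s : witness m = s/t - 1
    have htpos : 0 < t := by omega
    have hndvd : ¬ t ∣ s := coprime_ndvd hcop ht2
    have hmod := Nat.div_add_mod s t
    have hmodpos : 0 < s % t := Nat.pos_of_ne_zero (fun h => hndvd (Nat.dvd_of_mod_eq_zero h))
    have hmodlt : s % t < t := Nat.mod_lt _ htpos
    have hu2 : 2 ≤ s / t := by
      rw [Nat.le_div_iff_mul_le htpos]; omega
    obtain ⟨m, hm⟩ : ∃ m, s / t = m + 2 := ⟨s / t - 2, by omega⟩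
    rw [hm] at hmod
    refine ⟨m + 1, by omega, ?_, ?_⟩
    · have h22 : 2 * (m + 2) ≤ t * (m + 2) := Nat.mul_le_mul_right _ ht2
      omega
    · have hb : t * (m + 2) ≤ s - 1 := by omega
      have hv1 : (m + 1) * t / s = 0 := Nat.div_eq_of_lt (by nlinarith)
      have hv2 : (m + 2) * t / s = 0 := Nat.div_eq_of_lt (by nlinarith)
      have hv3 : (m + 3) * t / s = 1 := by
        have e : (m + 3) * t = t * (m + 2) + t := by ring
        apply Nat.div_eq_of_lt_le <;> rw [e] <;> omega
      rw [hv1, hv2, hv3]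
      omega
  · -- case 2t > s : let t' = s - t, witness m = s/t'
    have htne : ¬ (2 * t = s) := by
      intro h
      exact coprime_ndvd hcop ht2 ⟨2, by omega⟩
    have hst' : s < 2 * t := by omega
    obtain ⟨t', htt'⟩ : ∃ t', t + t' = s := ⟨s - t, by omega⟩
    have ht'2 : 2 ≤ t' := by omega
    have h2t'' : 2 * t' < s := by omega
    have hcop' : Nat.Coprime s t' := by
      have hd : Nat.gcd s t' ∣ t := by
        have hh : Nat.gcd s t' ∣ s - t' := Nat.dvd_sub (Nat.gcd_dvd_left _ _) (Nat.gcd_dvd_right _ _)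
        rwa [show s - t' = t from by omega] at hh
      exact Nat.dvd_one.mp (hcop ▸ Nat.dvd_gcd (Nat.gcd_dvd_left _ _) hd)
    have ht'pos : 0 < t' := by omega
    have hndvd : ¬ t' ∣ s := coprime_ndvd hcop' ht'2
    have hmod := Nat.div_add_mod s t'
    have hmodpos : 0 < s % t' := Nat.pos_of_ne_zero (fun h => hndvd (Nat.dvd_of_mod_eq_zero h))
    have hmodlt : s % t' < t' := Nat.mod_lt _ ht'pos
    have hu2 : 2 ≤ s / t' := by
      rw [Nat.le_div_iff_mul_le ht'pos]; omega
    obtain ⟨u', hm⟩ : ∃ u', s / t' = u' + 2 := ⟨s / t' - 2, by omega⟩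
    rw [hm] at hmod
    -- t' * (u'+2) + s % t' = s
    have ht's : t' < s := by omega
    have hb1 : t' * (u' + 2) + 1 ≤ s := by omega
    have hb2 : s + 1 ≤ t' * (u' + 3) := by
      have h5 : t' * (u' + 3) = t' * (u' + 2) + t' := by ring
      omega
    have hb3 : t' * (u' + 4) + 2 ≤ 2 * s := by
      have h5 : t' * (u' + 4) = t' * (u' + 2) + 2 * t' := by ring
      omega
    refine ⟨u' + 2, by omega, ?_, ?_⟩
    · have h22 : 2 * (u' + 2) ≤ t' * (u' + 2) := Nat.mul_le_mul_right _ ht'2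
      omega
    · have e2 : (u' + 2) * t + t' * (u' + 2) = (u' + 2) * s := by rw [← htt']; ring
      have e3 : (u' + 3) * t + t' * (u' + 3) = (u' + 3) * s := by rw [← htt']; ring
      have e4 : (u' + 4) * t + t' * (u' + 4) = (u' + 4) * s := by rw [← htt']; ring
      have hpos : 0 < t' * (u' + 2) := Nat.mul_pos ht'pos (by omega)
      have hv1 : (u' + 2) * t / s = u' + 1 := by
        apply Nat.div_eq_of_lt_le
        · linarith
        · linarith
      have hv2 : (u' + 3) * t / s = u' + 1 := by
        apply Nat.div_eq_of_lt_le
        · linarith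
        · linarith
      have hv3 : (u' + 4) * t / s = u' + 2 := by
        apply Nat.div_eq_of_lt_le
        · linarith
        · linarith
      rw [hv1, hv2, hv3]
      omega

private lemma forward (r s : ℕ) (hr : 1 < r) (hs1 : 1 ≤ s) (hs2 : s ≤ r + 1)
    (hcop : Nat.Coprime r s) (L : List ℕ) (hsort : L.Pairwise (· ≥ ·))
    (hsum : L.sum = r)
    (hpc : ∀ i ∈ Finset.Icc 1 r, partCount L i = 1 + s * (i - 1) / r) :
    s ∣ r - 1 ∨ s ∣ r + 1 := by
  by_cases hs1' : s = 1
  · left; simp [hs1']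
  by_cases hse : s = r + 1
  · right; exact ⟨1, by omega⟩
  have hsne_r : s ≠ r := by
    intro h
    rw [h, Nat.Coprime, Nat.gcd_self] at hcop
    omega
  have hs2' : 2 ≤ s := by omega
  have hsr : s < r := by omega
  have rpos : 0 < r := by omega
  have spos : 0 < s := by omega
  obtain ⟨q, hq⟩ : ∃ q, r / s = q := ⟨_, rfl⟩
  obtain ⟨t, ht⟩ : ∃ t, r % s = t := ⟨_, rfl⟩
  have hdm : s * q + t = r := by rw [← hq, ← ht]; exact Nat.div_add_mod r s
  have htlt : t < s := by rw [← ht]; exact Nat.mod_lt _ spos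
  have ht0 : t ≠ 0 := by
    intro h
    exact coprime_ndvd hcop hs2' (Nat.dvd_of_mod_eq_zero (by omega))
  by_cases ht1 : t = 1
  · left; exact ⟨q, by omega⟩
  by_cases hts1 : t = s - 1
  · right
    refine ⟨q + 1, ?_⟩
    have : s * (q + 1) = s * q + s := by ring
    omega
  exfalso
  have ht2 : 2 ≤ t := by omega
  have hts : t + 2 ≤ s := by omega
  -- C1
  have key : ∀ m i, 1 ≤ i → i ≤ r → (i ≤ (L.take m).sum ↔ s * (i - 1) < m * r) := by
    intro m i hi1 hi2
    have hlen : i ≤ (L.take L.length).sum := by rw [List.take_length, hsum]; exact hi2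
    have hpci := hpc i (Finset.mem_Icc.mpr ⟨hi1, hi2⟩)
    constructor
    · intro h
      have h2 : partCount L i ≤ m := Nat.sInf_le h
      rw [hpci] at h2
      exact (Nat.div_lt_iff_lt_mul rpos).1 (by omega)
    · intro h
      have hdiv : s * (i - 1) / r < m := (Nat.div_lt_iff_lt_mul rpos).2 h
      have h2 : partCount L i ≤ m := by rw [hpci]; omega
      have h3 : i ≤ (L.take (partCount L i)).sum :=
        Nat.sInf_mem (⟨L.length, hlen⟩ : Set.Nonempty {n | i ≤ (L.take n).sum})
      exact le_trans h3 (sum_take_mono L h2)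
  -- C2
  have hS : ∀ m, 1 ≤ m → m < s → (L.take m).sum = m * r / s + 1 := by
    intro m hm1 hm2
    have hnd : ¬ s ∣ m * r := by
      intro hdvd
      have hsm : s ∣ m := (Nat.Coprime.dvd_of_dvd_mul_right hcop.symm) hdvd
      have := Nat.le_of_dvd (by omega) hsm
      omega
    obtain ⟨v, hv⟩ : ∃ v, m * r / s = v := ⟨_, rfl⟩
    have hdm2 : s * v + m * r % s = m * r := by rw [← hv]; exact Nat.div_add_mod _ _
    have hmodpos : 0 < m * r % s :=
      Nat.pos_of_ne_zero (fun h => hnd (Nat.dvd_of_mod_eq_zero h))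
    have hmodlt : m * r % s < s := Nat.mod_lt _ spos
    have hvr : v + 1 ≤ r := by
      have hlt : m * r / s < r := by
        rw [Nat.div_lt_iff_lt_mul spos, mul_comm r s]
        exact mul_lt_mul_of_pos_right hm2 rpos
      omega
    rw [hv]
    apply le_antisymm
    · by_contra hcon
      push_neg at hcon
      have hSr : (L.take m).sum ≤ r := by
        rw [← hsum]; exact (L.take_sublist m).sum_le_sum (by simp)
      have h3 : v + 2 ≤ r := by omega
      have h4 := (key m (v + 2) (by omega) h3).1 (by omega)
      have e : s * (v + 2 - 1) = s * v + s := by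
        have h6 : v + 2 - 1 = v + 1 := by omega
        rw [h6]; ring
      omega
    · have h5 : s * (v + 1 - 1) < m * r := by
        rw [Nat.add_sub_cancel]
        omega
      exact (key m (v + 1) (by omega) hvr).2 h5
  -- C3 : concavity
  have hconc : ∀ n, (L.take (n + 2)).sum + (L.take n).sum ≤ 2 * (L.take (n + 1)).sum := by
    intro n
    rcases Nat.lt_or_ge (n + 1) L.length with h | h
    · have e1 : (L.take (n + 2)).sum = (L.take (n + 1)).sum + L.get ⟨n + 1, h⟩ :=
        List.sum_take_succ _ _ h
      have e2 : (L.take (n + 1)).sum = (L.take n).sum + L.get ⟨n, by omega⟩ :=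
        List.sum_take_succ _ _ (by omega)
      have hle : L.get ⟨n + 1, h⟩ ≤ L.get ⟨n, by omega⟩ :=
        List.Pairwise.rel_get_of_lt hsort (by simp [Fin.lt_def])
      omega
    · have e1 : L.take (n + 2) = L := List.take_of_length_le (by omega)
      have e2 : L.take (n + 1) = L := List.take_of_length_le h
      have e3 : (L.take n).sum ≤ L.sum := (L.take_sublist n).sum_le_sum (by simp)
      rw [e1, e2]
      omega
  -- coprime s t
  have hcops : Nat.Coprime s t := by
    have h := hcop.symm
    rw [Nat.Coprime, Nat.gcd_rec] at h
    rw [← ht]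
    exact Nat.coprime_comm.mp h
  obtain ⟨m, hm1, hm3, hviol⟩ := viol s t ht2 hts hcops
  have ediv : ∀ x : ℕ, x * r / s = x * q + x * t / s := by
    intro x
    have e : x * r = s * (x * q) + x * t := by rw [← hdm]; ring
    rw [e, Nat.mul_add_div spos]
  have hSm := hS m (by omega) (by omega)
  have hSm1 := hS (m + 1) (by omega) (by omega)
  have hSm2 := hS (m + 2) (by omega) (by omega)
  have hcc := hconc m
  rw [hSm, hSm1, hSm2, ediv m, ediv (m + 1), ediv (m + 2)] at hcc
  have e1 : (m + 1) * q = m * q + q := by ring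
  have e2 : (m + 2) * q = m * q + 2 * q := by ring
  omega

theorem partition_one_cycle (r s : ℕ) (hr : 1 < r) (hs1 : 1 ≤ s) (hs2 : s ≤ r + 1)
    (hcop : Nat.Coprime r s) :
    ((∃ L : List ℕ, L.Pairwise (· ≥ ·) ∧ (∀ x ∈ L, 0 < x) ∧ L.sum = r ∧
          ∀ i ∈ Finset.Icc 1 r, partCount L i = 1 + s * (i - 1) / r) ↔
        (s ∣ r - 1 ∨ s ∣ r + 1)) ∧
      ∀ r' r'' : ℕ, r = r' * s + r'' → (r'' = 1 ∨ r'' = s - 1) →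
        ∀ L : List ℕ,
          L = List.replicate r'' (r' + 1) ++
              List.replicate ((s - (if s = r + 1 then 1 else 0)) - r'') r' →
          L.Pairwise (· ≥ ·) ∧ (∀ x ∈ L, 0 < x) ∧ L.sum = r ∧
            ∀ i ∈ Finset.Icc 1 r, partCount L i = 1 + s * (i - 1) / r := by
  constructor
  · constructor
    · rintro ⟨L, hsort, hpos, hsum, hpc⟩
      exact forward r s hr hs1 hs2 hcop L hsort hsum hpc
    · rintro (⟨c, hc⟩ | ⟨c, hc⟩)
      · have h1 : r = c * s + 1 := by
          have e : s * c = c * s := by ring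
          omega
        exact ⟨_, construction r s hr hs1 hs2 hcop c 1 h1 (Or.inl rfl) _ rfl⟩
      · have hcpos : 1 ≤ c := by
          rcases Nat.eq_zero_or_pos c with h0 | h0
          · rw [h0] at hc; omega
          · exact h0
        obtain ⟨c', rfl⟩ : ∃ c', c = c' + 1 := ⟨c - 1, by omega⟩
        have h1 : r = c' * s + (s - 1) := by
          have e : s * (c' + 1) = c' * s + s := by ring
          omega
        exact ⟨_, construction r s hr hs1 hs2 hcop c' (s - 1) h1 (Or.inr rfl) _ rfl⟩
  · exact fun r' r'' h1 h2 L hL => construction r s hr hs1 hs2 hcop r' r'' h1 h2 L hL
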